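/- (A system with no solution having greatest second component.) Let φ : ℝ → ℝ be defined by φ(x) = x^3 sin(1/x) for x ≠ 0 and φ(0) = 0 (so φ is continuously differentiable, φ(0) = 0, and φ takes both signs in every neighborhood of 0). Consider the system y1' = 3|y1|^{2/3}, y2' = φ'(y1^{1/3}), with y1(0) = y2(0) = 0, where y1^{1/3} is the real cube root; a solution on [0,ε] is a pair of differentiable functions (ψ1, ψ2) : [0,ε] → ℝ² satisfying these equations and initial conditions. Then for every ε > 0 there is NO solution (ψ1, ψ2) on [0,ε] such that every solution (χ1, χ2) on [0,ε] satisfies χ2(t) ≤ ψ2(t) for all t ∈ [0,ε]. -/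

import Mathlib

open Set

/-- The function `φ(x) = x³ sin(1/x)` for `x ≠ 0`, `φ(0) = 0`. -/
noncomputable def Phi10 : ℝ → ℝ := fun x => if x = 0 then 0 else x ^ 3 * Real.sin (1 / x)

/-- The real cube root. -/
noncomputable def cbrt10 (y : ℝ) : ℝ := Real.sign y * |y| ^ ((1 : ℝ) / 3)

lemma phi_eval (x : ℝ) (h : x ≠ 0) : Phi10 x = x ^ 3 * Real.sin (1/x) := by
  simp [Phi10, h]

lemma phi_zero : Phi10 0 = 0 := by simp [Phi10]

lemma phi_hasderiv_zero : HasDerivAt Phi10 0 0 := by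
  rw [hasDerivAt_iff_tendsto_slope]
  apply squeeze_zero_norm (a := fun x => |x| ^ 2)
  · intro x
    rcases eq_or_ne x 0 with h | h
    · simp [slope, h]
    · rw [slope_def_field, phi_zero, Phi10, if_neg h]
      rw [sub_zero, sub_zero, div_eq_mul_inv, norm_mul, norm_mul]
      calc ‖x ^ 3‖ * ‖Real.sin (1/x)‖ * ‖x⁻¹‖ ≤ ‖x ^ 3‖ * 1 * ‖x⁻¹‖ := by
              gcongr
              rw [Real.norm_eq_abs, abs_le]
              exact ⟨Real.neg_one_le_sin _, Real.sin_le_one _⟩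
        _ = |x| ^ 2 := by
              rw [mul_one, norm_inv, Real.norm_eq_abs, Real.norm_eq_abs, abs_pow]
              field_simp [abs_eq_zero.ne.mpr h]
  · have : Filter.Tendsto (fun x : ℝ => |x| ^ 2) (nhds 0) (nhds 0) := by
      have := ((continuous_abs.pow 2)).tendsto (0:ℝ)
      exact (continuous_abs.pow 2).tendsto' (0:ℝ) 0 (by simp)
    exact this.mono_left nhdsWithin_le_nhds

lemma phi_diff (x : ℝ) : DifferentiableAt ℝ Phi10 x := by
  rcases eq_or_ne x 0 with h | h
  · exact h ▸ phi_hasderiv_zero.differentiableAt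
  · have hev : (fun y : ℝ => y ^ 3 * Real.sin (1 / y)) =ᶠ[nhds x] Phi10 := by
      filter_upwards [isOpen_ne.mem_nhds h] with y hy
      simp [Phi10, hy]
    have : DifferentiableAt ℝ (fun y : ℝ => y ^ 3 * Real.sin (1 / y)) x := by
      apply DifferentiableAt.mul
      · exact (differentiable_pow 3).differentiableAt
      · exact (Real.differentiable_sin.differentiableAt).comp x
          ((differentiableAt_const 1).div differentiableAt_id h)
    exact this.congr_of_eventuallyEq hev.symm

lemma phi_deriv_zero : deriv Phi10 0 = 0 := phi_hasderiv_zero.deriv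

lemma cbrt_zero : cbrt10 0 = 0 := by simp [cbrt10]

lemma abs_rpow_third_cube (t : ℝ) : |t ^ 3| ^ ((1:ℝ)/3) = |t| := by
  rw [abs_pow, ← Real.rpow_natCast |t| 3, ← Real.rpow_mul (abs_nonneg t)]
  norm_num

lemma cbrt_cube (t : ℝ) : cbrt10 (t ^ 3) = t := by
  rw [cbrt10, abs_rpow_third_cube]
  rcases lt_trichotomy t 0 with h | h | h
  · rw [Real.sign_of_neg (Odd.pow_neg (by decide) h : t ^ 3 < 0), abs_of_neg h]; ring
  · simp [h]
  · rw [Real.sign_of_pos (by positivity : (0:ℝ) < t ^ 3), abs_of_pos h]; ring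

lemma cube_cbrt (y : ℝ) : (cbrt10 y) ^ 3 = y := by
  rw [cbrt10, mul_pow]
  have h1 : (|y| ^ ((1:ℝ)/3)) ^ (3:ℕ) = |y| := by
    rw [← Real.rpow_natCast (|y| ^ ((1:ℝ)/3)) 3, ← Real.rpow_mul (abs_nonneg y)]
    norm_num
  rw [h1]
  rcases lt_trichotomy y 0 with h | h | h
  · rw [Real.sign_of_neg h, abs_of_neg h]; ring
  · simp [h]
  · rw [Real.sign_of_pos h, abs_of_pos h]; ring

lemma cbrt_hasDeriv {y : ℝ} (hy : 0 < y) :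
    HasDerivAt cbrt10 ((1:ℝ)/3 * y ^ ((1:ℝ)/3 - 1)) y := by
  have hev : (fun z : ℝ => z ^ ((1:ℝ)/3)) =ᶠ[nhds y] cbrt10 := by
    filter_upwards [isOpen_Ioi.mem_nhds hy] with z hz
    rw [cbrt10, Real.sign_of_pos hz, abs_of_pos hz, one_mul]
  exact (Real.hasDerivAt_rpow_const (Or.inl hy.ne')).congr_of_eventuallyEq hev.symm

lemma deriv_prod_one {y : ℝ} (hy : 0 < y) :
    (1:ℝ)/3 * y ^ ((1:ℝ)/3 - 1) * (3 * |y| ^ ((2:ℝ)/3)) = 1 := by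
  rw [abs_of_pos hy]
  have h2 : y ^ ((1:ℝ)/3 - 1) * y ^ ((2:ℝ)/3) = 1 := by
    rw [← Real.rpow_add hy]
    have : (1:ℝ)/3 - 1 + 2/3 = 0 := by norm_num
    rw [this, Real.rpow_zero]
  calc (1:ℝ)/3 * y ^ ((1:ℝ)/3-1) * (3 * y ^ ((2:ℝ)/3))
      = y ^ ((1:ℝ)/3-1) * y ^ ((2:ℝ)/3) := by ring
    _ = 1 := h2

lemma abs_cube_rpow (t : ℝ) : (3:ℝ) * |t ^ 3| ^ ((2:ℝ)/3) = 3 * t ^ 2 := by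
  rw [abs_pow, ← Real.rpow_natCast |t| 3, ← Real.rpow_mul (abs_nonneg t)]
  norm_num [show ((3:ℕ):ℝ) * (2/3) = ((2:ℕ):ℝ) by norm_num, Real.rpow_natCast, sq_abs]

/-- A solution of the system `y1' = 3|y1|^(2/3)`, `y2' = Φ'(y1^(1/3))`,
`y1 0 = y2 0 = 0` on `[0, ε]`. -/
def IsSolSys10 (ε : ℝ) (ψ1 ψ2 : ℝ → ℝ) : Prop :=
  ψ1 0 = 0 ∧ ψ2 0 = 0 ∧
    ∀ t ∈ Icc (0:ℝ) ε,
      HasDerivWithinAt ψ1 (3 * |ψ1 t| ^ ((2 : ℝ) / 3)) (Icc (0:ℝ) ε) t ∧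
      HasDerivWithinAt ψ2 (deriv Phi10 (cbrt10 (ψ1 t))) (Icc (0:ℝ) ε) t

lemma zero_sol (ε : ℝ) : IsSolSys10 ε (fun _ => 0) (fun _ => 0) := by
  refine ⟨rfl, rfl, fun t ht => ⟨?_, ?_⟩⟩
  · simpa [abs_zero, Real.zero_rpow (by norm_num : ((2:ℝ)/3) ≠ 0)] using
      (hasDerivWithinAt_const t (Icc (0:ℝ) ε) (0:ℝ))
  · simpa [cbrt_zero, phi_deriv_zero] using
      (hasDerivWithinAt_const t (Icc (0:ℝ) ε) (0:ℝ))

lemma cube_sol (ε : ℝ) : IsSolSys10 ε (fun t => t ^ 3) Phi10 := by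
  refine ⟨by norm_num, phi_zero, fun t ht => ⟨?_, ?_⟩⟩
  · have := (hasDerivAt_pow 3 t).hasDerivWithinAt (s := Icc (0:ℝ) ε)
    rw [abs_cube_rpow]
    exact this.congr_deriv (by norm_num)
  · rw [cbrt_cube]
    exact ((phi_diff t).hasDerivAt).hasDerivWithinAt

lemma phi_cont : Continuous Phi10 := by
  rw [continuous_iff_continuousAt]; exact fun x => (phi_diff x).continuousAt

/-- The system `y1' = 3|y1|^(2/3)`, `y2' = Φ'(y1^(1/3))` with zero initial data
has no solution whose second component dominates that of every other solution. -/
theorem no_greatest_second_component :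
    ∀ ε > (0:ℝ),
      ¬ ∃ ψ1 ψ2 : ℝ → ℝ, IsSolSys10 ε ψ1 ψ2 ∧
        ∀ χ1 χ2 : ℝ → ℝ, IsSolSys10 ε χ1 χ2 →
          ∀ t ∈ Icc (0:ℝ) ε, χ2 t ≤ ψ2 t := by
  rintro ε hε ⟨ψ1, ψ2, ⟨h10, h20, hder⟩, hmax⟩
  have mem0ε : (0:ℝ) ∈ Icc (0:ℝ) ε := ⟨le_refl 0, hε.le⟩
  have hψ2nonneg : ∀ t ∈ Icc (0:ℝ) ε, 0 ≤ ψ2 t := fun t ht =>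
    hmax _ _ (zero_sol ε) t ht
  have hc1 : ContinuousOn ψ1 (Icc 0 ε) := fun t ht => ((hder t ht).1).continuousWithinAt
  have hc2 : ContinuousOn ψ2 (Icc 0 ε) := fun t ht => ((hder t ht).2).continuousWithinAt
  have hmono : MonotoneOn ψ1 (Icc 0 ε) :=
    monotoneOn_of_hasDerivWithinAt_nonneg (convex_Icc 0 ε) hc1
      (fun x hx => ((hder x (interior_subset hx)).1).mono interior_subset)
      (fun x hx => by positivity)
  have h1nonneg : ∀ t ∈ Icc (0:ℝ) ε, 0 ≤ ψ1 t := fun t ht => by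
    have := hmono mem0ε ht ht.1
    rwa [h10] at this
  set S : Set ℝ := Icc 0 ε ∩ ψ1 ⁻¹' {0} with hS
  have hSc : IsClosed S := hc1.preimage_isClosed_of_isClosed isClosed_Icc isClosed_singleton
  have h0S : (0:ℝ) ∈ S := ⟨mem0ε, by simpa using h10⟩
  have hSbdd : BddAbove S := ⟨ε, fun x hx => hx.1.2⟩
  set a := sSup S with ha
  have haS : a ∈ S := hSc.csSup_mem ⟨0, h0S⟩ hSbdd
  have haIcc : a ∈ Icc (0:ℝ) ε := haS.1
  have ha0 : ψ1 a = 0 := haS.2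
  have hzψ1 : ∀ t ∈ Icc (0:ℝ) a, ψ1 t = 0 := fun t ht =>
    le_antisymm (ha0 ▸ hmono ⟨ht.1, ht.2.trans haIcc.2⟩ haIcc ht.2)
      (h1nonneg t ⟨ht.1, ht.2.trans haIcc.2⟩)
  have hpos : ∀ t, a < t → t ≤ ε → 0 < ψ1 t := by
    intro t h1 h2
    rcases (h1nonneg t ⟨haIcc.1.trans h1.le, h2⟩).lt_or_eq with h | h
    · exact h
    · exact absurd (le_csSup hSbdd ⟨⟨haIcc.1.trans h1.le, h2⟩, by simp [← h]⟩)
        (not_le.mpr h1)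
  have hz2 : ∀ t ∈ Icc (0:ℝ) a, ψ2 t = 0 := by
    refine eq_of_has_deriv_right_eq (f' := fun _ => (0:ℝ)) ?_ ?_
      (hc2.mono (Icc_subset_Icc_right haIcc.2)) continuousOn_const (by simp [h20])
    · intro x hx
      have hxε : x ∈ Icc (0:ℝ) ε := ⟨hx.1, hx.2.le.trans haIcc.2⟩
      have h := (hder x hxε).2
      rw [hzψ1 x ⟨hx.1, hx.2.le⟩, cbrt_zero, phi_deriv_zero] at h
      exact h.mono_of_mem_nhdsWithin (Icc_mem_nhdsGE_of_mem ⟨hx.1, hx.2.trans_le haIcc.2⟩)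
    · intro x hx
      exact hasDerivWithinAt_const _ _ _
  rcases eq_or_lt_of_le haIcc.2 with haε | haε
  · -- a = ε : ψ2 ≡ 0, contradict with cube solution
    obtain ⟨n, hn⟩ := exists_nat_gt (1/ε)
    have hπ := Real.pi_gt_three
    have hn0 : (0:ℝ) ≤ n := n.cast_nonneg
    set c : ℝ := Real.pi/2 + n*(2*Real.pi) with hcdef
    have hc : 1/ε < c := by nlinarith
    have hc0 : 0 < c := lt_trans (by positivity) hc
    set x := c⁻¹ with hxdef
    have hx0 : 0 < x := inv_pos.mpr hc0
    have hxε : x < ε := by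
      rw [hxdef, show ε = (1/ε)⁻¹ by field_simp]
      exact inv_strictAnti₀ (by positivity) hc
    have h1 : Phi10 x ≤ ψ2 x := hmax _ _ (cube_sol ε) x ⟨hx0.le, hxε.le⟩
    have h2 : ψ2 x = 0 := hz2 x ⟨hx0.le, haε ▸ hxε.le⟩
    have h3 : Phi10 x = x ^ 3 := by
      rw [phi_eval x hx0.ne', hxdef, one_div, inv_inv, hcdef,
        Real.sin_add_nat_mul_two_pi, Real.sin_pi_div_two, mul_one]
    nlinarith [pow_pos hx0 3]
  · -- a < ε
    have hcbrt : ∀ t, a < t → t ≤ ε → cbrt10 (ψ1 t) = t - a := by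
      intro t h1t h2t
      set c := cbrt10 (ψ1 t) with hcc
      have key : ∀ a' ∈ Ioc a t, ψ1 a' = (c - t + a') ^ 3 := by
        intro a' ha'
        have subm : Icc a' t ⊆ Icc (0:ℝ) ε := fun s hs =>
          ⟨haIcc.1.trans (ha'.1.le.trans hs.1), hs.2.trans h2t⟩
        have derivs : ∀ s ∈ Ico a' t, HasDerivWithinAt (fun u => cbrt10 (ψ1 u)) 1 (Ici s) s := by
          intro s hs
          have hsε : s ∈ Icc (0:ℝ) ε := subm ⟨hs.1, hs.2.le⟩
          have hps : 0 < ψ1 s := hpos s (lt_of_lt_of_le ha'.1 hs.1) hsε.2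
          have hcomp := HasDerivAt.comp_hasDerivWithinAt_of_eq s (cbrt_hasDeriv hps) (hder s hsε).1 rfl
          rw [deriv_prod_one hps] at hcomp
          exact hcomp.mono_of_mem_nhdsWithin
            (Icc_mem_nhdsGE_of_mem ⟨hsε.1, lt_of_lt_of_le hs.2 h2t⟩)
        have cont : ContinuousOn (fun u => cbrt10 (ψ1 u)) (Icc a' t) := by
          intro s hs
          have hsε : s ∈ Icc (0:ℝ) ε := subm hs
          have hps : 0 < ψ1 s := hpos s (lt_of_lt_of_le ha'.1 hs.1) hsε.2
          exact (cbrt_hasDeriv hps).continuousAt.comp_continuousWithinAt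
            ((hc1 s hsε).mono subm)
        have heq := eq_of_has_deriv_right_eq (f' := fun _ => (1:ℝ))
          (g := fun u => u + (cbrt10 (ψ1 a') - a')) derivs
          (fun s _ => (hasDerivWithinAt_id s (Ici s)).add_const _)
          cont (by fun_prop) (by ring)
        have h : cbrt10 (ψ1 t) = t + (cbrt10 (ψ1 a') - a') := by
          simpa using heq t (right_mem_Icc.mpr ha'.2)
        have h' : cbrt10 (ψ1 a') = c - t + a' := by rw [← hcc] at h; linarith
        calc ψ1 a' = (cbrt10 (ψ1 a')) ^ 3 := (cube_cbrt _).symm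
          _ = (c - t + a') ^ 3 := by rw [h']
      have hev : ψ1 =ᶠ[nhdsWithin a (Ioi a)] (fun a' => (c - t + a') ^ 3) := by
        filter_upwards [Ioc_mem_nhdsGT h1t] with a' ha' using key a' ha'
      have hl1 : Filter.Tendsto ψ1 (nhdsWithin a (Ioi a)) (nhds 0) := by
        rw [← nhdsWithin_Ioc_eq_nhdsGT h1t]
        have hca : ContinuousWithinAt ψ1 (Ioc a t) a :=
          (hc1 a haIcc).mono (fun s hs => ⟨haIcc.1.trans hs.1.le, hs.2.trans h2t⟩)
        rw [ContinuousWithinAt, ha0] at hca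
        exact hca
      have hl2 : Filter.Tendsto (fun a' => (c - t + a') ^ 3) (nhdsWithin a (Ioi a))
          (nhds ((c - t + a) ^ 3)) :=
        ((continuous_const.add continuous_id).pow 3).tendsto' a _ rfl |>.mono_left
          nhdsWithin_le_nhds
      have h0 : (0:ℝ) = (c - t + a) ^ 3 := tendsto_nhds_unique (hl1.congr' hev) hl2
      have : c - t + a = 0 := by
        have := pow_eq_zero_iff (M₀ := ℝ) (n := 3) (by norm_num) |>.mp h0.symm
        exact this
      linarith
    have hψ2eq : ∀ t ∈ Icc a ε, ψ2 t = Phi10 (t - a) := by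
      refine eq_of_has_deriv_right_eq (f' := fun s => deriv Phi10 (cbrt10 (ψ1 s))) ?_ ?_
        (hc2.mono (Icc_subset_Icc_left haIcc.1)) ?_ ?_
      · intro s hs
        have hsε : s ∈ Icc (0:ℝ) ε := ⟨haIcc.1.trans hs.1, hs.2.le⟩
        exact ((hder s hsε).2).mono_of_mem_nhdsWithin
          (Icc_mem_nhdsGE_of_mem ⟨hsε.1, hs.2⟩)
      · intro s hs
        have hg : HasDerivAt (fun u => Phi10 (u - a)) (deriv Phi10 (s - a)) s := by
          have h1 := (phi_diff (s - a)).hasDerivAt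
          have h2 := (hasDerivAt_id s).sub_const a
          have := HasDerivAt.comp s h1 h2
          exact (mul_one (deriv Phi10 (s - a))) ▸ this
        have heq : deriv Phi10 (s - a) = deriv Phi10 (cbrt10 (ψ1 s)) := by
          rcases eq_or_lt_of_le hs.1 with h | h
          · rw [← h, sub_self, ha0, cbrt_zero]
          · rw [hcbrt s h hs.2.le]
        have hres : HasDerivWithinAt (fun u => Phi10 (u - a))
            (deriv Phi10 (cbrt10 (ψ1 s))) (Ici s) s := heq ▸ hg.hasDerivWithinAt
        exact hres
      · exact (phi_cont.comp (continuous_id.sub continuous_const)).continuousOn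
      · rw [hz2 a ⟨haIcc.1, le_refl a⟩, sub_self, phi_zero]
    obtain ⟨n, hn⟩ := exists_nat_gt (1/(ε - a))
    have hπ := Real.pi_gt_three
    have hn0 : (0:ℝ) ≤ n := n.cast_nonneg
    have hea : 0 < ε - a := sub_pos.mpr haε
    set c : ℝ := Real.pi/2 + Real.pi + n*(2*Real.pi) with hcdef
    have hc : 1/(ε - a) < c := by nlinarith
    have hc0 : 0 < c := lt_trans (by positivity) hc
    set x := c⁻¹ with hxdef
    have hx0 : 0 < x := inv_pos.mpr hc0
    have hxea : x < ε - a := by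
      rw [hxdef, show ε - a = (1/(ε - a))⁻¹ by field_simp]
      exact inv_strictAnti₀ (by positivity) hc
    set t := a + x with htdef
    have htmem : t ∈ Icc a ε := ⟨le_add_of_nonneg_right hx0.le, by linarith⟩
    have h1 : ψ2 t = Phi10 x := by
      rw [hψ2eq t htmem, htdef, add_sub_cancel_left]
    have h2 : Phi10 x = -x ^ 3 := by
      rw [phi_eval x hx0.ne', hxdef, one_div, inv_inv, hcdef, show
        Real.pi/2 + Real.pi + ↑n*(2*Real.pi) = Real.pi/2 + Real.pi + ↑n*(2*Real.pi) from rfl,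
        Real.sin_add_nat_mul_two_pi, Real.sin_add_pi, Real.sin_pi_div_two]
      ring
    have h3 : 0 ≤ ψ2 t := hψ2nonneg t ⟨haIcc.1.trans htmem.1, htmem.2⟩
    nlinarith [pow_pos hx0 3]
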